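/- arXiv:1804.06608 — 2 statements merged into one kernel-verified Lean document; each statement's English description precedes it below -/
import Mathlib

section
/- Let β > 1 and α ∈ [0, α*(β)]. Then the upper Besicovitch set Ē^β(α) = {x ∈ [0,1) : limsup_{n→∞} S_n(x,β)/n ≤ α} has Hausdorff dimension at most h̄^β(α), where h̄^β(α) is the β-adic upper entropy function. -/
open Filter MeasureTheory Set
open scoped ENNReal NNReal

/-- The β-transformation `T_β(x) = βx - ⌊βx⌋`. -/
noncomputable def betaT (β x : ℝ) : ℝ := Int.fract (β * x)

/-- The `(n+1)`-st digit of the β-expansion of `x` (0-indexed):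
`betaDigit β x n = ⌊β ⬝ T_β^n(x)⌋`. -/
noncomputable def betaDigit (β x : ℝ) (n : ℕ) : ℕ := (⌊β * (betaT β)^[n] x⌋).toNat

/-- The set `Σ_β^n` of β-admissible words of length `n`. -/
def admissibleWords (β : ℝ) (n : ℕ) : Set (Fin n → ℕ) :=
  {w | ∃ x ∈ Set.Ico (0:ℝ) 1, ∀ i : Fin n, betaDigit β x i = w i}

/-- The set `Σ_β` of β-admissible digit sequences. -/
def admissibleSeqs (β : ℝ) : Set (ℕ → ℕ) :=
  {e | ∃ x ∈ Set.Ico (0:ℝ) 1, ∀ i, betaDigit β x i = e i}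

/-- The cylinder `I_n(w)` of a word `w`. -/
def cylinder (β : ℝ) {n : ℕ} (w : Fin n → ℕ) : Set ℝ :=
  {x | x ∈ Set.Ico (0:ℝ) 1 ∧ ∀ i : Fin n, betaDigit β x i = w i}

/-- The partial digit sum `S_n(x,β)`. -/
noncomputable def Sdig (β x : ℝ) (n : ℕ) : ℝ := ∑ i ∈ Finset.range n, (betaDigit β x i : ℝ)

/-- `h^β(α,n,δ) = card{w ∈ Σ_β^n : n(α-δ) < Σᵢ wᵢ < n(α+δ)}`. -/
noncomputable def hCount (β α δ : ℝ) (n : ℕ) : ℕ :=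
  Nat.card {w : Fin n → ℕ | w ∈ admissibleWords β n ∧
    (n : ℝ) * (α - δ) < ∑ i, (w i : ℝ) ∧ (∑ i, (w i : ℝ)) < n * (α + δ)}

/-- `h̄^β(α,n,δ) = card{w ∈ Σ_β^n : Σᵢ wᵢ < n(α+δ)}`. -/
noncomputable def hBarCount (β α δ : ℝ) (n : ℕ) : ℕ :=
  Nat.card {w : Fin n → ℕ | w ∈ admissibleWords β n ∧ (∑ i, (w i : ℝ)) < n * (α + δ)}

lemma betaT_mem (β x : ℝ) : betaT β x ∈ Set.Ico (0:ℝ) 1 :=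
  ⟨Int.fract_nonneg _, Int.fract_lt_one _⟩

lemma iter_mem {β x : ℝ} (hx : x ∈ Set.Ico (0:ℝ) 1) (n : ℕ) :
    (betaT β)^[n] x ∈ Set.Ico (0:ℝ) 1 := by
  cases n with
  | zero => exact hx
  | succ n => rw [Function.iterate_succ_apply']; exact betaT_mem _ _

lemma digit_cast {β x : ℝ} (hβ : 0 < β) (hx : x ∈ Set.Ico (0:ℝ) 1) (n : ℕ) :
    (betaDigit β x n : ℝ) = (⌊β * (betaT β)^[n] x⌋ : ℤ) := by
  have h0 : (0:ℝ) ≤ β * (betaT β)^[n] x := mul_nonneg hβ.le (iter_mem hx n).1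
  have : (0:ℤ) ≤ ⌊β * (betaT β)^[n] x⌋ := Int.floor_nonneg.2 h0
  rw [betaDigit]
  exact_mod_cast Int.toNat_of_nonneg this

lemma digit_le {β x : ℝ} (hβ : 1 < β) (hx : x ∈ Set.Ico (0:ℝ) 1) (n : ℕ) :
    betaDigit β x n ≤ (⌊β⌋).toNat := by
  have h := iter_mem (β := β) hx n
  have : β * (betaT β)^[n] x ≤ β := by
    nlinarith [h.1, h.2.le]
  exact Int.toNat_le_toNat (Int.floor_le_floor this)

lemma step {β x : ℝ} (hβ : 0 < β) (hx : x ∈ Set.Ico (0:ℝ) 1) (n : ℕ) :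
    (betaT β)^[n+1] x = β * (betaT β)^[n] x - (betaDigit β x n : ℝ) := by
  rw [Function.iterate_succ_apply', digit_cast hβ hx n]
  rfl

lemma expansion {β x : ℝ} (hβ : 0 < β) (hx : x ∈ Set.Ico (0:ℝ) 1) (n : ℕ) :
    x = (∑ i ∈ Finset.range n, (betaDigit β x i : ℝ) * (β ^ (i+1))⁻¹)
      + (betaT β)^[n] x * (β ^ n)⁻¹ := by
  induction n with
  | zero => simp
  | succ n ih =>
    rw [Finset.sum_range_succ]
    have hs := step hβ hx n
    have hb : β ≠ 0 := hβ.ne'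
    have hbn : (β:ℝ)^n ≠ 0 := pow_ne_zero _ hb
    have h2 : (betaT β)^[n+1] x * (β ^ (n+1))⁻¹ + (betaDigit β x n : ℝ) * (β ^ (n+1))⁻¹
        = (betaT β)^[n] x * (β ^ n)⁻¹ := by
      rw [hs]; field_simp; ring
    linear_combination ih - h2

lemma dist_le {β x y : ℝ} (hβ : 1 < β) (hx : x ∈ Set.Ico (0:ℝ) 1)
    (hy : y ∈ Set.Ico (0:ℝ) 1) (n : ℕ)
    (h : ∀ i < n, betaDigit β x i = betaDigit β y i) :
    |x - y| ≤ (β ^ n)⁻¹ := by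
  have hβ0 : (0:ℝ) < β := lt_trans one_pos hβ
  have ex := expansion hβ0 hx n
  have ey := expansion hβ0 hy n
  have hsum : (∑ i ∈ Finset.range n, (betaDigit β x i : ℝ) * (β ^ (i+1))⁻¹)
      = ∑ i ∈ Finset.range n, (betaDigit β y i : ℝ) * (β ^ (i+1))⁻¹ := by
    refine Finset.sum_congr rfl fun i hi => ?_
    rw [h i (Finset.mem_range.1 hi)]
  have hxy : x - y = ((betaT β)^[n] x - (betaT β)^[n] y) * (β ^ n)⁻¹ := by
    linear_combination ex - ey + hsum
  rw [hxy, abs_mul]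
  have hpos : (0:ℝ) < (β ^ n)⁻¹ := by positivity
  rw [abs_of_pos hpos]
  have h1 := iter_mem (β := β) hx n
  have h2 := iter_mem (β := β) hy n
  have : |(betaT β)^[n] x - (betaT β)^[n] y| ≤ 1 := by
    rw [abs_le]; constructor <;> nlinarith [h1.1, h1.2.le, h2.1, h2.2.le]
  nlinarith

lemma cyl_diam {β : ℝ} (hβ : 1 < β) {n : ℕ} (w : Fin n → ℕ) :
    EMetric.diam (cylinder β w) ≤ ENNReal.ofReal ((β ^ n)⁻¹) := by
  refine EMetric.diam_le fun x hx y hy => ?_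
  rw [edist_dist, Real.dist_eq]
  refine ENNReal.ofReal_le_ofReal ?_
  exact dist_le hβ hx.1 hy.1 n fun i hi => (hx.2 ⟨i, hi⟩).trans (hy.2 ⟨i, hi⟩).symm

/-- The set counted by `hBarCount`. -/
def hBarSet (β α δ : ℝ) (n : ℕ) : Set (Fin n → ℕ) :=
  {w : Fin n → ℕ | w ∈ admissibleWords β n ∧ (∑ i, (w i : ℝ)) < n * (α + δ)}

lemma hBarSet_finite {β : ℝ} (hβ : 1 < β) (α δ : ℝ) (n : ℕ) :
    (hBarSet β α δ n).Finite := by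
  have : hBarSet β α δ n ⊆ Set.pi Set.univ (fun _ : Fin n => Set.Iic (⌊β⌋).toNat) := by
    rintro w ⟨⟨x, hx, hw⟩, -⟩ i -
    exact le_trans (le_of_eq (hw i).symm) (digit_le hβ hx i)
  exact Set.Finite.subset (Set.Finite.pi fun _ => Set.finite_Iic _) this

lemma hBarCount_le {β : ℝ} (hβ : 1 < β) (α δ : ℝ) (n : ℕ) :
    hBarCount β α δ n ≤ ((⌊β⌋).toNat + 1) ^ n := by
  have hinj : Function.Injective
      (fun (p : hBarSet β α δ n) (i : Fin n) =>
        (⟨min (p.1 i) (⌊β⌋).toNat, by simp [Nat.lt_succ_iff]⟩ : Fin ((⌊β⌋).toNat + 1))) := by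
    intro p q h
    have hle : ∀ i, p.1 i ≤ (⌊β⌋).toNat := by
      obtain ⟨x, hx, hw⟩ := p.2.1
      exact fun i => (hw i) ▸ digit_le hβ hx i
    have hle' : ∀ i, q.1 i ≤ (⌊β⌋).toNat := by
      obtain ⟨x, hx, hw⟩ := q.2.1
      exact fun i => (hw i) ▸ digit_le hβ hx i
    apply Subtype.ext
    funext i
    have h2 := congrArg Fin.val (congrFun h i)
    simpa [min_eq_left (hle i), min_eq_left (hle' i)] using h2
  calc hBarCount β α δ n ≤ Nat.card (Fin n → Fin ((⌊β⌋).toNat + 1)) :=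
        Nat.card_le_card_of_injective _ hinj
    _ = ((⌊β⌋).toNat + 1) ^ n := by simp [Nat.card_eq_fintype_card]

lemma tsum_indicator_card {γ : Type*} [Countable γ] {S : Set γ} (hfin : S.Finite) (c : ℝ≥0∞) :
    ∑' w : γ, S.indicator (fun _ => c) w = (Nat.card S) * c := by
  rw [tsum_eq_sum (s := hfin.toFinset)
    (fun b hb => Set.indicator_of_notMem (by simpa using hb) _)]
  have : ∀ w ∈ hfin.toFinset, S.indicator (fun _ => c) w = c := fun w hw =>
    Set.indicator_of_mem (by simpa using hw) _
  rw [Finset.sum_congr rfl this, Finset.sum_const, Nat.card_coe_set_eq,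
    Set.ncard_eq_toFinset_card _ hfin, nsmul_eq_mul]

/-- For `0 ≤ α ≤ α*(β)`, the upper Besicovitch set
`Ē^β(α) = {x ∈ [0,1) : limsup_n S_n(x,β)/n ≤ α}` has Hausdorff dimension at most
the upper entropy `h̄^β(α) = lim_{δ→0⁺} limsup_n log h̄^β(α,n,δ)/(n log β)`. -/
theorem stmt18 (β : ℝ) (hβ : 1 < β) (αstar α : ℝ)
    (hstar : ∀ᵐ x ∂(volume.restrict (Set.Ico (0:ℝ) 1)),
      Tendsto (fun n : ℕ => Sdig β x n / n) atTop (nhds αstar))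
    (hα : α ∈ Set.Icc 0 αstar) (L : ℝ)
    (hL : Tendsto (fun δ : ℝ =>
        limsup (fun n : ℕ => Real.log (hBarCount β α δ n) / (n * Real.log β)) atTop)
      (nhdsWithin 0 (Set.Ioi 0)) (nhds L)) :
    dimH {x : ℝ | x ∈ Set.Ico (0:ℝ) 1 ∧
        limsup (fun n : ℕ => Sdig β x n / n) atTop ≤ α} ≤
      ENNReal.ofReal L := by
  classical
  have hβ0 : (0:ℝ) < β := lt_trans one_pos hβ
  set E := {x : ℝ | x ∈ Set.Ico (0:ℝ) 1 ∧
      limsup (fun n : ℕ => Sdig β x n / n) atTop ≤ α} with hE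
  set M : ℕ := (⌊β⌋).toNat with hM
  refine dimH_le fun d' hd'top => ?_
  by_contra hd
  push_neg at hd
  -- basic facts about d' and choice of s
  set d : ℝ := (d' : ℝ) with hdd
  have hdfin : (ENNReal.ofReal L) ≠ ⊤ := ENNReal.ofReal_ne_top
  have hmax : max L 0 < d := by
    have := ENNReal.toReal_lt_toReal hdfin ENNReal.coe_ne_top |>.2 hd
    rw [hdd]; simpa [ENNReal.toReal_ofReal'] using this
  have hd0 : 0 < d := lt_of_le_of_lt (le_max_right _ _) hmax
  have hLd : L < d := lt_of_le_of_lt (le_max_left _ _) hmax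
  set s : ℝ := (max L 0 + d) / 2 with hs
  have hLs : L < s := by
    have : max L 0 < s := by simp only [hs]; linarith
    exact lt_of_le_of_lt (le_max_left _ _) this
  have hsd : s < d := by simp only [hs]; linarith [hmax]
  -- choose δ
  obtain ⟨δ, hgδ, hδ0⟩ :=
    ((hL.eventually (Iio_mem_nhds hLs)).and (eventually_mem_nhdsWithin)).exists
  rw [Set.mem_Ioi] at hδ0
  -- hBarCount bound from the limsup
  have hlogβ : 0 < Real.log β := Real.log_pos hβ
  have hbddlog : IsBoundedUnder (· ≤ ·) atTop
      (fun n : ℕ => Real.log (hBarCount β α δ n) / (n * Real.log β)) := by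
    refine isBoundedUnder_of ⟨Real.log ((M:ℝ) + 1) / Real.log β, fun n => ?_⟩
    have hlogM : 0 ≤ Real.log ((M:ℝ)+1) :=
      Real.log_nonneg (by linarith [Nat.cast_nonneg (α := ℝ) M])
    rcases Nat.eq_zero_or_pos n with hn | hn
    · simp only [hn, Nat.cast_zero, zero_mul, div_zero]
      exact div_nonneg hlogM hlogβ.le
    · have hn0 : (0:ℝ) < n := by exact_mod_cast hn
      have h1 : Real.log (hBarCount β α δ n) ≤ (n:ℝ) * Real.log ((M:ℝ)+1) := by
        rcases Nat.eq_zero_or_pos (hBarCount β α δ n) with h0 | h0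
        · simp only [h0, Nat.cast_zero, Real.log_zero]
          exact mul_nonneg (Nat.cast_nonneg n) hlogM
        · have := hBarCount_le hβ α δ n
          calc Real.log (hBarCount β α δ n) ≤ Real.log (((M+1:ℕ):ℝ)^n) := by
                apply Real.log_le_log (by exact_mod_cast h0)
                exact_mod_cast this
            _ = (n:ℝ) * Real.log ((M:ℝ)+1) := by rw [Real.log_pow]; push_cast; ring
      rw [div_le_div_iff₀ (by positivity) hlogβ]
      calc Real.log (hBarCount β α δ n) * Real.log β
          ≤ ((n:ℝ) * Real.log ((M:ℝ)+1)) * Real.log β := by nlinarith [hlogβ]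
        _ = Real.log ((M:ℝ)+1) * ((n:ℝ) * Real.log β) := by ring
  have hevB : ∀ᶠ n : ℕ in atTop, (hBarCount β α δ n : ℝ) ≤ β ^ (s * n) := by
    have h1 : ∀ᶠ n : ℕ in atTop,
        Real.log (hBarCount β α δ n) / (n * Real.log β) < s :=
      eventually_lt_of_limsup_lt hgδ hbddlog
    filter_upwards [h1, eventually_ge_atTop 1] with n hn hn1
    have hn0 : (0:ℝ) < n := by exact_mod_cast hn1
    rcases Nat.eq_zero_or_pos (hBarCount β α δ n) with h0 | h0
    · rw [h0]; push_cast; positivity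
    · have hpos : (0:ℝ) < (hBarCount β α δ n : ℝ) := by exact_mod_cast h0
      have hlog : Real.log (hBarCount β α δ n) < s * ((n:ℝ) * Real.log β) := by
        rw [div_lt_iff₀ (by positivity)] at hn; linarith
      calc (hBarCount β α δ n : ℝ) = Real.exp (Real.log (hBarCount β α δ n)) :=
            (Real.exp_log hpos).symm
        _ ≤ Real.exp (s * ((n:ℝ) * Real.log β)) := Real.exp_le_exp.2 hlog.le
        _ = β ^ (s * n) := by
            rw [Real.rpow_def_of_pos hβ0]; ring_nf
  -- the series terms
  set T : ℕ → ℝ≥0∞ := fun n =>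
    (hBarCount β α δ n : ℝ≥0∞) * (ENNReal.ofReal ((β ^ n)⁻¹)) ^ d with hT
  set q : ℝ≥0∞ := ENNReal.ofReal (β ^ (s - d)) with hq
  have hq1 : q < 1 := by
    rw [hq, ← ENNReal.ofReal_one]
    exact ENNReal.ofReal_lt_ofReal_iff_of_nonneg (by positivity) |>.2
      (Real.rpow_lt_one_of_one_lt_of_neg hβ (by linarith))
  have hTfin : ∀ n, T n ≠ ⊤ := by
    intro n
    refine ENNReal.mul_ne_top (ENNReal.natCast_ne_top _) ?_
    exact ENNReal.rpow_ne_top_of_nonneg hd0.le ENNReal.ofReal_ne_top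
  have hTq : ∀ᶠ n : ℕ in atTop, T n ≤ q ^ n := by
    filter_upwards [hevB] with n hn
    have hbn : (0:ℝ) < (β ^ n)⁻¹ := by positivity
    have e0 : (ENNReal.ofReal ((β ^ n)⁻¹)) ^ d = ENNReal.ofReal (((β ^ n)⁻¹) ^ d) :=
      ENNReal.ofReal_rpow_of_pos hbn
    have e1 : ((β ^ n : ℝ))⁻¹ ^ d = β ^ (-((n:ℝ) * d)) := by
      rw [← Real.rpow_natCast β n, ← Real.rpow_neg hβ0.le, ← Real.rpow_mul hβ0.le]
      ring_nf
    have e2 : β ^ (s * (n:ℝ)) * β ^ (-((n:ℝ) * d)) = (β ^ (s - d)) ^ n := by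
      rw [← Real.rpow_add hβ0, ← Real.rpow_natCast (β ^ (s-d)) n,
        ← Real.rpow_mul hβ0.le]
      ring_nf
    calc T n ≤ ENNReal.ofReal (β ^ (s * n)) * ENNReal.ofReal (((β ^ n)⁻¹) ^ d) := by
          simp only [hT]
          rw [e0]
          exact mul_le_mul' (by
            rw [show ((hBarCount β α δ n : ℝ≥0∞)) = ENNReal.ofReal (hBarCount β α δ n) by
              simp [ENNReal.ofReal_natCast]]
            exact ENNReal.ofReal_le_ofReal hn) le_rfl
      _ = ENNReal.ofReal (β ^ (s * n) * ((β ^ n)⁻¹) ^ d) :=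
          (ENNReal.ofReal_mul (by positivity)).symm
      _ = q ^ n := by
          rw [e1, e2, hq, ENNReal.ofReal_pow (by positivity)]
  have hTsum : ∑' n, T n ≠ ⊤ := by
    obtain ⟨N, hN⟩ := eventually_atTop.1 hTq
    have hgeom : (∑' n : ℕ, q ^ n) ≠ ⊤ := by
      rw [ENNReal.tsum_geometric]
      exact ENNReal.inv_ne_top.2 (by simp [tsub_eq_zero_iff_le, hq1.not_ge])
    have hsplit : ∀ n : ℕ, T n = (if n < N then T n else 0) + (if N ≤ n then T n else 0) := by
      intro n
      by_cases h : n < N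
      · rw [if_pos h, if_neg (by omega), add_zero]
      · rw [if_neg h, if_pos (by omega), zero_add]
    have heq : (∑' n, T n) = (∑' n : ℕ, (if n < N then T n else 0))
        + ∑' n : ℕ, (if N ≤ n then T n else 0) := by
      rw [← ENNReal.tsum_add]
      exact tsum_congr hsplit
    rw [heq]
    refine ENNReal.add_ne_top.2 ⟨?_, ?_⟩
    · rw [tsum_eq_sum (s := Finset.range N)
        (fun b hb => if_neg (by simpa using hb))]
      refine (ENNReal.sum_lt_top.2 fun i _ => ?_).ne
      split
      · exact (hTfin i).lt_top
      · simp
    · refine ne_top_of_le_ne_top hgeom (ENNReal.tsum_le_tsum fun n => ?_)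
      split
      · next h => exact hN n h
      · simp
  -- the covering sets
  set t : ℕ → (Σ n : ℕ, Fin n → ℕ) → Set ℝ := fun l σ =>
    if l ≤ σ.1 ∧ σ.2 ∈ hBarSet β α δ σ.1 then cylinder β σ.2 else ∅ with ht
  have hdiam : ∀ l : ℕ, ∀ σ : (Σ n : ℕ, Fin n → ℕ),
      EMetric.diam (t l σ) ≤ ENNReal.ofReal ((β ^ l)⁻¹) := by
    intro l σ
    by_cases h : l ≤ σ.1 ∧ σ.2 ∈ hBarSet β α δ σ.1
    · simp only [ht, if_pos h]
      refine le_trans (cyl_diam hβ σ.2) (ENNReal.ofReal_le_ofReal ?_)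
      exact inv_anti₀ (by positivity) (pow_le_pow_right₀ hβ.le h.1)
    · simp [ht, if_neg h, EMetric.diam, Metric.ediam_empty]
  have hcover : ∀ l : ℕ, E ⊆ ⋃ σ : (Σ n : ℕ, Fin n → ℕ), t l σ := by
    intro l x hx
    obtain ⟨hx1, hx2⟩ := hx
    have hbdd : IsBoundedUnder (· ≤ ·) atTop (fun n : ℕ => Sdig β x n / n) := by
      refine isBoundedUnder_of ⟨(M:ℝ), fun n => ?_⟩
      rcases Nat.eq_zero_or_pos n with hn | hn
      · simp [hn, Sdig]
      · have hn0 : (0:ℝ) < n := by exact_mod_cast hn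
        rw [div_le_iff₀ hn0]
        calc Sdig β x n ≤ ∑ _i ∈ Finset.range n, (M:ℝ) := by
              refine Finset.sum_le_sum fun i _ => ?_
              exact_mod_cast digit_le hβ hx1 i
          _ = (n:ℝ) * M := by simp [mul_comm]
          _ = (M:ℝ) * n := by ring
    have hev : ∀ᶠ n : ℕ in atTop, Sdig β x n / n < α + δ :=
      eventually_lt_of_limsup_lt (lt_of_le_of_lt hx2 (by linarith)) hbdd
    obtain ⟨n, hn1, hn2⟩ := (hev.and (eventually_ge_atTop (max l 1))).exists
    have hnl : l ≤ n := le_trans (le_max_left _ _) hn2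
    have hn0 : (0:ℝ) < n := by
      have : 1 ≤ n := le_trans (le_max_right _ _) hn2
      exact_mod_cast this
    set w : Fin n → ℕ := fun i => betaDigit β x i with hw
    have hsum : (∑ i, (w i : ℝ)) = Sdig β x n := by
      rw [Sdig, ← Fin.sum_univ_eq_sum_range]
    have hmem : w ∈ hBarSet β α δ n := by
      refine ⟨⟨x, hx1, fun i => rfl⟩, ?_⟩
      rw [hsum]
      rw [div_lt_iff₀ hn0] at hn1
      linarith
    refine Set.mem_iUnion.2 ⟨⟨n, w⟩, ?_⟩
    simp only [ht, if_pos (And.intro hnl hmem)]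
    exact ⟨hx1, fun i => rfl⟩
  -- apply the Hausdorff measure bound
  have hr0 : Tendsto (fun l : ℕ => ENNReal.ofReal ((β ^ l)⁻¹)) atTop (nhds 0) := by
    rw [show (0:ℝ≥0∞) = ENNReal.ofReal 0 by simp]
    apply ENNReal.tendsto_ofReal
    simp only [← inv_pow]
    exact tendsto_pow_atTop_nhds_zero_of_lt_one (by positivity) (inv_lt_one_of_one_lt₀ hβ)
  have hmu : μH[d] E ≤ liminf (fun l : ℕ =>
      ∑' σ : (Σ n : ℕ, Fin n → ℕ), EMetric.diam (t l σ) ^ d) atTop :=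
    MeasureTheory.Measure.hausdorffMeasure_le_liminf_tsum d E (fun l => ENNReal.ofReal ((β ^ l)⁻¹)) hr0 t
      (Eventually.of_forall hdiam) (Eventually.of_forall hcover)
  -- bound the tsum by the tail sums
  have hGF : ∀ l : ℕ, (∑' σ : (Σ n : ℕ, Fin n → ℕ), EMetric.diam (t l σ) ^ d)
      ≤ ∑' k : ℕ, T (k + l) := by
    intro l
    have h1 : (∑' σ : (Σ n : ℕ, Fin n → ℕ), EMetric.diam (t l σ) ^ d)
        = ∑' n : ℕ, ∑' w : Fin n → ℕ, EMetric.diam (t l ⟨n, w⟩) ^ d :=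
      ENNReal.tsum_sigma' _
    have h2 : ∀ n : ℕ, (∑' w : Fin n → ℕ, EMetric.diam (t l ⟨n, w⟩) ^ d)
        ≤ (if l ≤ n then T n else 0) := by
      intro n
      by_cases hln : l ≤ n
      · rw [if_pos hln]
        have hle : ∀ w : Fin n → ℕ, EMetric.diam (t l ⟨n, w⟩) ^ d
            ≤ (hBarSet β α δ n).indicator
              (fun _ => (ENNReal.ofReal ((β ^ n)⁻¹)) ^ d) w := by
          intro w
          by_cases hw : w ∈ hBarSet β α δ n
          · rw [Set.indicator_of_mem hw]
            simp only [ht, if_pos (And.intro hln hw)]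
            exact ENNReal.rpow_le_rpow (cyl_diam hβ w) hd0.le
          · rw [Set.indicator_of_notMem hw]
            simp only [ht, hw, and_false, if_false]
            simp [EMetric.diam, Metric.ediam_empty, ENNReal.zero_rpow_of_pos hd0]
        calc (∑' w : Fin n → ℕ, EMetric.diam (t l ⟨n, w⟩) ^ d)
            ≤ ∑' w : Fin n → ℕ, (hBarSet β α δ n).indicator
              (fun _ => (ENNReal.ofReal ((β ^ n)⁻¹)) ^ d) w := ENNReal.tsum_le_tsum hle
          _ = (Nat.card (hBarSet β α δ n)) * (ENNReal.ofReal ((β ^ n)⁻¹)) ^ d :=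
              tsum_indicator_card (hBarSet_finite hβ α δ n) _
          _ = T n := by simp only [hT]; rfl
      · rw [if_neg hln]
        have : ∀ w : Fin n → ℕ, EMetric.diam (t l ⟨n, w⟩) ^ d = 0 := by
          intro w
          have : ¬ (l ≤ n ∧ w ∈ hBarSet β α δ n) := fun h => hln h.1
          simp only [ht, if_neg this]
          simp [EMetric.diam, Metric.ediam_empty, ENNReal.zero_rpow_of_pos hd0]
        simp [this]
    have h3 : (∑' n : ℕ, (if l ≤ n then T n else 0)) = ∑' k : ℕ, T (k + l) := by
      rw [← Function.Injective.tsum_eq (f := fun n => if l ≤ n then T n else 0)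
        (g := fun k : ℕ => k + l) (add_left_injective l) ?_]
      · refine tsum_congr fun k => ?_
        rw [if_pos (Nat.le_add_left l k)]
      · intro n hn
        have : l ≤ n := by by_contra h; simp [h] at hn
        exact ⟨n - l, by show n - l + l = n; omega⟩
    calc (∑' σ : (Σ n : ℕ, Fin n → ℕ), EMetric.diam (t l σ) ^ d)
        = ∑' n : ℕ, ∑' w : Fin n → ℕ, EMetric.diam (t l ⟨n, w⟩) ^ d := h1
      _ ≤ ∑' n : ℕ, (if l ≤ n then T n else 0) := ENNReal.tsum_le_tsum h2
      _ = ∑' k : ℕ, T (k + l) := h3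
  have htail : Tendsto (fun l : ℕ => ∑' k : ℕ, T (k + l)) atTop (nhds 0) :=
    ENNReal.tendsto_sum_nat_add T hTsum
  have hzero : μH[d] E = 0 := by
    have h1 : liminf (fun l : ℕ =>
        ∑' σ : (Σ n : ℕ, Fin n → ℕ), EMetric.diam (t l σ) ^ d) atTop
        ≤ liminf (fun l : ℕ => ∑' k : ℕ, T (k + l)) atTop :=
      liminf_le_liminf (Eventually.of_forall hGF)
    have h2 : liminf (fun l : ℕ => ∑' k : ℕ, T (k + l)) atTop = 0 :=
      htail.liminf_eq
    have := le_trans hmu (le_trans h1 (le_of_eq h2))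
    exact le_antisymm this (by simp)
  rw [hzero] at hd'top
  exact ENNReal.zero_ne_top hd'top
end

section
/- Let β > 1 and let β_m < β satisfy Σ_{β_m} ⊆ Σ_β. Define D = π_β(Σ_{β_m}) ⊆ [0,1), where π_β(ε) = Σ_i ε_i/β^i, and define g : D → [0,1) by g(x) = π_{β_m}(ε(x,β)), where ε(x,β) is the β-digit sequence of x. Then g is (log β_m / log β)-Hölder (Lipschitz with respect to the corresponding exponent) on D, and consequently dim_H E ≥ (log β_m/ log β) · dim_H g(E) for every E ⊆ D. -/
open Filter MeasureTheory Set

/-- The evaluation map `π_γ(ε) = Σ_{i≥1} ε_i/γ^i` (0-indexed digits). -/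
noncomputable def piBeta (γ : ℝ) (e : ℕ → ℕ) : ℝ := ∑' i : ℕ, (e i : ℝ) / γ ^ (i + 1)

namespace Stmt19Aux

lemma iter_mem {β x : ℝ} (hx : x ∈ Set.Ico (0:ℝ) 1) (n : ℕ) :
    (betaT β)^[n] x ∈ Set.Ico (0:ℝ) 1 := by
  induction n with
  | zero => simpa using hx
  | succ n ih =>
    rw [Function.iterate_succ_apply']
    exact ⟨Int.fract_nonneg _, Int.fract_lt_one _⟩

lemma digit_cast {β x : ℝ} (hβ : 1 < β) (hx : x ∈ Set.Ico (0:ℝ) 1) (n : ℕ) :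
    (betaDigit β x n : ℝ) = β * (betaT β)^[n] x - (betaT β)^[n+1] x := by
  have h0 : (0:ℝ) ≤ β * (betaT β)^[n] x :=
    mul_nonneg (by linarith) (iter_mem hx n).1
  have hfl : (0:ℤ) ≤ ⌊β * (betaT β)^[n] x⌋ := Int.floor_nonneg.mpr h0
  have h1 : (betaDigit β x n : ℝ) = ((⌊β * (betaT β)^[n] x⌋ : ℤ) : ℝ) := by
    unfold betaDigit
    exact_mod_cast congrArg (Int.cast : ℤ → ℝ) (Int.toNat_of_nonneg hfl)
  have h2 : (betaT β)^[n+1] x = β * (betaT β)^[n] x - ((⌊β * (betaT β)^[n] x⌋:ℤ):ℝ) := by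
    rw [Function.iterate_succ_apply', betaT, ← Int.self_sub_floor]
  rw [h1, h2]; ring

lemma digit_le {β x : ℝ} (hβ : 1 < β) (hx : x ∈ Set.Ico (0:ℝ) 1) (n : ℕ) :
    (betaDigit β x n : ℝ) ≤ β := by
  rw [digit_cast hβ hx n]
  have h1 := (iter_mem (β := β) hx n).2
  have h2 := (iter_mem (β := β) hx (n+1)).1
  nlinarith [hβ]

lemma sum_digits {β x : ℝ} (hβ : 1 < β) (hx : x ∈ Set.Ico (0:ℝ) 1) (n : ℕ) :
    ∑ i ∈ Finset.range n, (betaDigit β x i : ℝ) / β ^ (i+1)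
      = x - (betaT β)^[n] x / β ^ n := by
  have hβ0 : (β:ℝ) ≠ 0 := by positivity
  induction n with
  | zero => simp
  | succ n ih =>
    rw [Finset.sum_range_succ, ih, digit_cast hβ hx n]
    have hpow : (β:ℝ)^n ≠ 0 := pow_ne_zero _ hβ0
    field_simp
    ring

lemma summable_div {β : ℝ} (hβ : 1 < β) {d : ℕ → ℕ} (hd : ∀ i, (d i:ℝ) ≤ β) :
    Summable (fun i : ℕ => (d i : ℝ) / β ^ (i+1)) := by
  have hβ0 : (0:ℝ) < β := by linarith
  refine Summable.of_nonneg_of_le (fun i => by positivity) (fun i => ?_)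
    (summable_geometric_of_lt_one (r := 1/β) (by positivity)
      ((div_lt_one hβ0).mpr hβ))
  have h1 : (d i : ℝ) / β^(i+1) ≤ β / β^(i+1) := by gcongr; exact hd i
  have h2 : β / β^(i+1) = (1/β)^i := by
    rw [one_div, inv_pow, pow_succ, eq_comm, inv_eq_one_div, div_eq_div_iff (by positivity) (by positivity)]
    ring
  rw [← h2]; exact h1

lemma summable_digits {β x : ℝ} (hβ : 1 < β) (hx : x ∈ Set.Ico (0:ℝ) 1) :
    Summable (fun i : ℕ => (betaDigit β x i : ℝ) / β ^ (i+1)) :=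
  summable_div hβ (digit_le hβ hx)

lemma piBeta_digit_eq {β x : ℝ} (hβ : 1 < β) (hx : x ∈ Set.Ico (0:ℝ) 1) :
    piBeta β (betaDigit β x) = x := by
  have hβ0 : (0:ℝ) < β := by linarith
  have hsum := summable_digits hβ hx
  have h1 : Tendsto (fun n => ∑ i ∈ Finset.range n, (betaDigit β x i : ℝ)/β^(i+1))
      atTop (nhds (piBeta β (betaDigit β x))) := hsum.hasSum.tendsto_sum_nat
  have h0 : Tendsto (fun n : ℕ => (betaT β)^[n] x / β^n) atTop (nhds 0) := by
    refine squeeze_zero (fun n => div_nonneg (iter_mem (β := β) hx n).1 (by positivity)) (fun n => ?_)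
      (tendsto_pow_atTop_nhds_zero_of_lt_one (r := 1/β) (by positivity)
        ((div_lt_one hβ0).mpr hβ))
    have hnn := (iter_mem (β := β) hx n).1
    rw [one_div, inv_pow, ← one_div]
    apply div_le_div_of_nonneg_right ?_ (by positivity)
    exact le_of_lt (iter_mem (β := β) hx n).2
  have h2 : Tendsto (fun n : ℕ => x - (betaT β)^[n] x / β^n) atTop (nhds x) := by
    simpa using tendsto_const_nhds.sub h0
  have h3 : (fun n => ∑ i ∈ Finset.range n, (betaDigit β x i : ℝ)/β^(i+1))
      = fun n : ℕ => x - (betaT β)^[n] x / β^n := funext (sum_digits hβ hx)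
  exact tendsto_nhds_unique h1 (h3 ▸ h2)

lemma digit_shift (β x : ℝ) (k i : ℕ) :
    betaDigit β x (k + i) = betaDigit β ((betaT β)^[k] x) i := by
  unfold betaDigit
  rw [add_comm, Function.iterate_add_apply]

lemma mem_D {β βm : ℝ} (hβm : 1 < βm) (hβ : 1 < β)
    (hsub : admissibleSeqs βm ⊆ admissibleSeqs β) {x : ℝ}
    (hx : x ∈ piBeta β '' admissibleSeqs βm) :
    ∃ u ∈ Set.Ico (0:ℝ) 1, x ∈ Set.Ico (0:ℝ) 1 ∧
      betaDigit β x = betaDigit βm u ∧ piBeta βm (betaDigit β x) = u := by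
  obtain ⟨e, he, hex⟩ := hx
  obtain ⟨v, hv, hve⟩ := hsub he
  obtain ⟨u, hu, hue⟩ := he
  have heu : e = betaDigit βm u := funext fun i => (hue i).symm
  have hev : e = betaDigit β v := funext fun i => (hve i).symm
  have hxv : x = v := by rw [← hex, hev, piBeta_digit_eq hβ hv]
  refine ⟨u, hu, hxv ▸ hv, ?_, ?_⟩
  · rw [hxv, ← hev, heu]
  · rw [hxv, ← hev, heu, piBeta_digit_eq hβm hu]

lemma piBeta_le {β βm u : ℝ} (hβm : 1 < βm) (hlt : βm < β) (hu : u ∈ Set.Ico (0:ℝ) 1) :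
    piBeta β (betaDigit βm u) ≤ βm / β := by
  have hβ : 1 < β := hβm.trans hlt
  have hb0 : (0:ℝ) < β := by linarith
  have hm0 : (0:ℝ) < βm := by linarith
  have hdle : ∀ i, (betaDigit βm u i : ℝ) ≤ β := fun i => (digit_le hβm hu i).trans hlt.le
  have hr1 : (0:ℝ) ≤ βm/β := by positivity
  have hr2 : βm/β ≤ 1 := by rw [div_le_one hb0]; linarith
  have h1 : piBeta β (betaDigit βm u) ≤ (βm/β) * piBeta βm (betaDigit βm u) := by
    rw [piBeta, piBeta, ← tsum_mul_left]
    refine Summable.tsum_le_tsum (fun i => ?_) (summable_div hβ hdle)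
      ((summable_digits hβm hu).mul_left _)
    calc (betaDigit βm u i : ℝ)/β^(i+1)
        = ((betaDigit βm u i : ℝ)/βm^(i+1)) * (βm/β)^(i+1) := by
          rw [div_pow]; field_simp; try ring
      _ ≤ ((betaDigit βm u i : ℝ)/βm^(i+1)) * (βm/β) := by
          apply mul_le_mul_of_nonneg_left _ (by positivity)
          calc (βm/β)^(i+1) ≤ (βm/β)^1 := pow_le_pow_of_le_one hr1 hr2 (by omega)
            _ = βm/β := pow_one _
      _ = (βm/β) * ((betaDigit βm u i : ℝ)/βm^(i+1)) := mul_comm _ _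
  have h2 : piBeta βm (betaDigit βm u) ≤ 1 := by
    rw [piBeta_digit_eq hβm hu]; exact hu.2.le
  calc piBeta β (betaDigit βm u) ≤ (βm/β) * piBeta βm (betaDigit βm u) := h1
    _ ≤ (βm/β) * 1 := mul_le_mul_of_nonneg_left h2 hr1
    _ = βm/β := mul_one _

lemma tail_small {β βm x u : ℝ} (hβm : 1 < βm) (hlt : βm < β)
    (hx : x ∈ Set.Ico (0:ℝ) 1) (hu : u ∈ Set.Ico (0:ℝ) 1)
    (h : betaDigit β x = betaDigit βm u) (k : ℕ) :
    (betaT β)^[k] x ≤ βm/β := by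
  have hβ : 1 < β := hβm.trans hlt
  have h2 : betaDigit β ((betaT β)^[k] x) = betaDigit βm ((betaT βm)^[k] u) := by
    funext i
    rw [← digit_shift, ← digit_shift, h]
  have h3 := piBeta_digit_eq hβ (iter_mem (β := β) hx k)
  rw [h2] at h3
  rw [← h3]
  exact piBeta_le hβm hlt (iter_mem hu k)

lemma lower_bound {β βm x y u w : ℝ} (hβm : 1 < βm) (hlt : βm < β)
    (hx : x ∈ Set.Ico (0:ℝ) 1) (hy : y ∈ Set.Ico (0:ℝ) 1)
    (hu : u ∈ Set.Ico (0:ℝ) 1) (hw : w ∈ Set.Ico (0:ℝ) 1)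
    (hxu : betaDigit β x = betaDigit βm u) (hyw : betaDigit β y = betaDigit βm w)
    {k : ℕ} (hagree : ∀ i < k, betaDigit β x i = betaDigit β y i)
    (hk : betaDigit β x k < betaDigit β y k) :
    (β - βm)/β^2 * ((β^k)⁻¹) ≤ y - x := by
  have hβ : 1 < β := hβm.trans hlt
  have hb0 : (0:ℝ) < β := by linarith
  have hbk : (0:ℝ) < β^(k+1) := by positivity
  have h1 := sum_digits hβ hx (k+1)
  have h2 := sum_digits hβ hy (k+1)
  rw [Finset.sum_range_succ] at h1 h2
  have hse : ∑ i ∈ Finset.range k, (betaDigit β x i:ℝ)/β^(i+1)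
      = ∑ i ∈ Finset.range k, (betaDigit β y i:ℝ)/β^(i+1) :=
    Finset.sum_congr rfl fun i hi => by rw [hagree i (Finset.mem_range.mp hi)]
  have key : y - x = (betaDigit β y k:ℝ)/β^(k+1) - (betaDigit β x k:ℝ)/β^(k+1)
      + (betaT β)^[k+1] y/β^(k+1) - (betaT β)^[k+1] x/β^(k+1) := by
    have e1 : x - (betaT β)^[k+1] x / β^(k+1)
        = ∑ i ∈ Finset.range k, (betaDigit β x i:ℝ)/β^(i+1) + (betaDigit β x k:ℝ)/β^(k+1) := h1.symm
    have e2 : y - (betaT β)^[k+1] y / β^(k+1)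
        = ∑ i ∈ Finset.range k, (betaDigit β y i:ℝ)/β^(i+1) + (betaDigit β y k:ℝ)/β^(k+1) := h2.symm
    rw [hse] at e1
    linarith
  have hd : (betaDigit β x k : ℝ) + 1 ≤ (betaDigit β y k : ℝ) := by exact_mod_cast hk
  have t1 : (1:ℝ)/β^(k+1) ≤ (betaDigit β y k:ℝ)/β^(k+1) - (betaDigit β x k:ℝ)/β^(k+1) := by
    rw [div_sub_div_same]
    apply div_le_div_of_nonneg_right ?_ hbk.le
    linarith
  have t2 : (betaT β)^[k+1] x/β^(k+1) ≤ (βm/β)/β^(k+1) :=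
    div_le_div_of_nonneg_right (tail_small hβm hlt hx hu hxu (k+1)) hbk.le
  have t3 : (0:ℝ) ≤ (betaT β)^[k+1] y/β^(k+1) := by
    have := (iter_mem (β := β) hy (k+1)).1
    positivity
  have heq : (β - βm)/β^2 * ((β^k)⁻¹) = 1/β^(k+1) - (βm/β)/β^(k+1) := by
    field_simp
    try ring
    try tauto
  rw [heq, key]
  linarith

lemma rpow_key {β βm : ℝ} (hβm : 1 < βm) (hlt : βm < β) (k : ℕ) :
    ((β^k : ℝ)⁻¹) ^ (Real.log βm / Real.log β) = ((βm^k : ℝ))⁻¹ := by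
  have hβ : 1 < β := hβm.trans hlt
  have hb0 : (0:ℝ) < β := by linarith
  have hm0 : (0:ℝ) < βm := by linarith
  have hlb : Real.log β ≠ 0 := ne_of_gt (Real.log_pos hβ)
  rw [← Real.rpow_natCast β k, ← Real.rpow_natCast βm k,
      ← Real.rpow_neg hb0.le, ← Real.rpow_neg hm0.le,
      ← Real.rpow_mul hb0.le, Real.rpow_def_of_pos hb0, Real.rpow_def_of_pos hm0]
  congr 1
  field_simp

end Stmt19Aux

/-- Let `β_m < β` with `Σ_{β_m} ⊆ Σ_β`, `D = π_β(Σ_{β_m})`, and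
`g(x) = π_{β_m}(ε(x,β))`. Then `g` is `(log β_m / log β)`-Hölder on `D`, and
`dim_H E ≥ (log β_m / log β) · dim_H g(E)` for every `E ⊆ D`. -/
theorem stmt19 (β βm : ℝ) (hβm : 1 < βm) (hlt : βm < β)
    (hsub : admissibleSeqs βm ⊆ admissibleSeqs β) :
    (∃ C : NNReal, HolderOnWith C (Real.toNNReal (Real.log βm / Real.log β))
      (fun x : ℝ => piBeta βm (betaDigit β x)) (piBeta β '' admissibleSeqs βm)) ∧
    ∀ E ⊆ piBeta β '' admissibleSeqs βm,
      ENNReal.ofReal (Real.log βm / Real.log β) *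
        dimH ((fun x : ℝ => piBeta βm (betaDigit β x)) '' E) ≤ dimH E := by
  classical
  have hβ : 1 < β := hβm.trans hlt
  have hb0 : (0:ℝ) < β := by linarith
  have hm0 : (0:ℝ) < βm := by linarith
  set s : ℝ := Real.log βm / Real.log β with hs
  have hs0 : 0 < s := div_pos (Real.log_pos hβm) (Real.log_pos hβ)
  set c : ℝ := (β - βm)/β^2 with hcdef
  have hc0 : 0 < c := div_pos (by linarith) (by positivity)
  have key : ∃ C : NNReal, HolderOnWith C (Real.toNNReal s)
      (fun x : ℝ => piBeta βm (betaDigit β x)) (piBeta β '' admissibleSeqs βm) := by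
    refine ⟨Real.toNNReal (c⁻¹ ^ s), fun x hxD y hyD => ?_⟩
    obtain ⟨u, hu, hx, hxu, hgx⟩ := Stmt19Aux.mem_D hβm hβ hsub hxD
    obtain ⟨w, hw, hy, hyw, hgy⟩ := Stmt19Aux.mem_D hβm hβ hsub hyD
    simp only [hgx, hgy]
    by_cases hef : betaDigit β x = betaDigit β y
    · have huw : u = w := by rw [← hgx, hef, hgy]
      simp [huw]
    · have hexi : ∃ i, betaDigit β x i ≠ betaDigit β y i := by
        by_contra hcon; push_neg at hcon; exact hef (funext hcon)
      set k := Nat.find hexi with hkdef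
      have hk : betaDigit β x k ≠ betaDigit β y k := Nat.find_spec hexi
      have hagree : ∀ i < k, betaDigit β x i = betaDigit β y i := fun i hi =>
        not_ne_iff.mp (Nat.find_min hexi hi)
      have hmk : (0:ℝ) < βm^k := by positivity
      -- Claim A : |u - w| ≤ (βm^k)⁻¹
      have h1 := Stmt19Aux.sum_digits hβm hu k
      have h2 := Stmt19Aux.sum_digits hβm hw k
      have hse : ∑ i ∈ Finset.range k, (betaDigit βm u i:ℝ)/βm^(i+1)
          = ∑ i ∈ Finset.range k, (betaDigit βm w i:ℝ)/βm^(i+1) :=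
        Finset.sum_congr rfl fun i hi => by
          rw [← hxu, ← hyw, hagree i (Finset.mem_range.mp hi)]
      have hU := Stmt19Aux.iter_mem (β := βm) hu k
      have hW := Stmt19Aux.iter_mem (β := βm) hw k
      have key2 : u - w = ((betaT βm)^[k] u - (betaT βm)^[k] w)/βm^k := by
        rw [hse] at h1
        rw [sub_div]
        linarith
      have hA : |u - w| ≤ (βm^k)⁻¹ := by
        rw [key2, abs_div, abs_of_pos hmk, div_le_iff₀ hmk, inv_mul_cancel₀ hmk.ne']
        exact abs_le.mpr ⟨by linarith [hU.1, hU.2, hW.1, hW.2],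
          by linarith [hU.1, hU.2, hW.1, hW.2]⟩
      -- Claim B : c * (β^k)⁻¹ ≤ |x - y|
      have hB : c * (β^k)⁻¹ ≤ |x - y| := by
        rcases lt_or_gt_of_ne hk with h | h
        · have hlow := Stmt19Aux.lower_bound hβm hlt hx hy hu hw hxu hyw hagree h
          calc c * (β^k)⁻¹ ≤ y - x := hlow
            _ ≤ |x - y| := by rw [abs_sub_comm]; exact le_abs_self _
        · have hagree' : ∀ i < k, betaDigit β y i = betaDigit β x i :=
            fun i hi => (hagree i hi).symm
          have hlow := Stmt19Aux.lower_bound hβm hlt hy hx hw hu hyw hxu hagree' h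
          exact hlow.trans (le_abs_self _)
      have hfin : |u - w| ≤ c⁻¹ ^ s * |x - y| ^ s := by
        calc |u - w| ≤ (βm^k)⁻¹ := hA
          _ = ((β^k)⁻¹) ^ s := (Stmt19Aux.rpow_key hβm hlt k).symm
          _ = c⁻¹ ^ s * (c * (β^k)⁻¹) ^ s := by
              rw [Real.mul_rpow hc0.le (by positivity : (0:ℝ) ≤ (β^k)⁻¹), ← mul_assoc,
                ← Real.mul_rpow (inv_nonneg.mpr hc0.le) hc0.le,
                inv_mul_cancel₀ hc0.ne', Real.one_rpow, one_mul]
          _ ≤ c⁻¹ ^ s * |x - y| ^ s := by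
              exact mul_le_mul_of_nonneg_left
                (Real.rpow_le_rpow (by positivity) hB hs0.le)
                (Real.rpow_nonneg (inv_nonneg.mpr hc0.le) _)
      rw [edist_dist, edist_dist, Real.dist_eq, Real.dist_eq, Real.coe_toNNReal s hs0.le]
      have hcast : ((Real.toNNReal (c⁻¹ ^ s) : NNReal) : ENNReal) = ENNReal.ofReal (c⁻¹ ^ s) := rfl
      rw [hcast, ENNReal.ofReal_rpow_of_nonneg (abs_nonneg _) hs0.le,
          ← ENNReal.ofReal_mul (Real.rpow_nonneg (inv_nonneg.mpr hc0.le) _)]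
      exact ENNReal.ofReal_le_ofReal hfin
  refine ⟨key, ?_⟩
  intro E hE
  obtain ⟨C, hC⟩ := key
  have hr : 0 < Real.toNNReal s := Real.toNNReal_pos.mpr hs0
  have h2 := (hC.mono hE).dimH_image_le hr
  have hof : ENNReal.ofReal s = ((Real.toNNReal s : NNReal) : ENNReal) := rfl
  rw [hof]
  calc ((Real.toNNReal s : NNReal) : ENNReal)
        * dimH ((fun x : ℝ => piBeta βm (betaDigit β x)) '' E)
      ≤ ((Real.toNNReal s : NNReal) : ENNReal) * (dimH E / ((Real.toNNReal s : NNReal) : ENNReal)) :=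
        mul_le_mul_right h2 _
    _ = dimH E := ENNReal.mul_div_cancel (by exact_mod_cast hr.ne') ENNReal.coe_ne_top
end
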